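/- Let 2/3 < c < 1. Then there exists a constant C = C(c) > 0 such that for all real numbers a₁, a₂, a₃ and τ, ∫_ℝ ∫_ℝ ⟨τ₁ − a₁⟩^{−c} ⟨τ₂ − a₂⟩^{−c} ⟨τ − τ₁ + τ₂ − a₃⟩^{−c} dτ₁ dτ₂ ≤ C ⟨τ − a₁ + a₂ − a₃⟩^{−(3c − 2)}. -/

import Mathlib

open MeasureTheory Real Set

/-- The Japanese bracket `⟨x⟩ = (1 + x²)^{1/2}`. -/
noncomputable def jpn (x : ℝ) : ℝ := Real.sqrt (1 + x ^ 2)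

/-! ### Basic properties of `jpn` -/

lemma jpn_pos (x : ℝ) : 0 < jpn x := Real.sqrt_pos.2 (by positivity)

lemma jpn_nonneg (x : ℝ) : 0 ≤ jpn x := (jpn_pos x).le

lemma one_le_jpn (x : ℝ) : 1 ≤ jpn x := by
  have h := Real.sqrt_le_sqrt (show (1:ℝ) ≤ 1 + x ^ 2 by nlinarith [sq_nonneg x])
  simpa [jpn] using h

lemma jpn_neg_arg (x : ℝ) : jpn (-x) = jpn x := by simp [jpn]

lemma abs_le_jpn (x : ℝ) : |x| ≤ jpn x := by
  rw [jpn, ← Real.sqrt_sq_eq_abs]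
  exact Real.sqrt_le_sqrt (by nlinarith)

lemma jpn_le_one_add_abs (x : ℝ) : jpn x ≤ 1 + |x| := by
  rw [jpn, show (1 : ℝ) + |x| = Real.sqrt ((1 + |x|) ^ 2) by
    rw [Real.sqrt_sq (by positivity)]]
  exact Real.sqrt_le_sqrt (by nlinarith [abs_nonneg x, sq_abs x])

lemma one_add_abs_le (x : ℝ) : 1 + |x| ≤ Real.sqrt 2 * jpn x := by
  rw [jpn, ← Real.sqrt_mul (by norm_num : (0:ℝ) ≤ 2),
    show (1 : ℝ) + |x| = Real.sqrt ((1 + |x|) ^ 2) by rw [Real.sqrt_sq (by positivity)]]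
  exact Real.sqrt_le_sqrt (by nlinarith [sq_abs x, sq_nonneg (|x| - 1)])

/-- If `|w| ≤ 2 |u|` then `jpn w ≤ 2 jpn u`. -/
lemma jpn_le_two_jpn {u w : ℝ} (h : |w| ≤ 2 * |u|) : jpn w ≤ 2 * jpn u := by
  rw [jpn, jpn, show (2 : ℝ) * Real.sqrt (1 + u ^ 2) = Real.sqrt (4 * (1 + u ^ 2)) by
    rw [show (4 : ℝ) = 2 ^ 2 by norm_num, Real.sqrt_mul (by positivity), Real.sqrt_sq (by norm_num)]]
  exact Real.sqrt_le_sqrt (by nlinarith [sq_abs w, sq_abs u, abs_nonneg w, abs_nonneg u])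

lemma continuous_jpn : Continuous jpn :=
  Real.continuous_sqrt.comp (by continuity)

lemma continuous_jpn_rpow (s : ℝ) : Continuous fun x => jpn x ^ s :=
  continuous_jpn.rpow_const fun x => Or.inl (jpn_pos x).ne'

lemma jpn_rpow_nonneg (x s : ℝ) : 0 ≤ jpn x ^ s := Real.rpow_nonneg (jpn_nonneg x) s

/-- anti-monotonicity of `t ^ (-s)` in the base. -/
lemma rpow_neg_anti {a b s : ℝ} (ha : 0 < a) (hab : a ≤ b) (hs : 0 ≤ s) :
    b ^ (-s) ≤ a ^ (-s) :=
  Real.rpow_le_rpow_of_nonpos ha hab (neg_nonpos.2 hs)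

lemma jpn_rpow_mul_jpn_rpow (x s t : ℝ) :
    jpn x ^ (-s) * jpn x ^ (-t) = jpn x ^ (-(s + t)) := by
  rw [← Real.rpow_add (jpn_pos x)]; ring_nf

/-! ### Integrability lemmas -/

lemma jpn_rpow_eq (x m : ℝ) : jpn x ^ (-m) = (1 + x ^ 2) ^ (-m / 2) := by
  rw [jpn, Real.sqrt_eq_rpow, ← Real.rpow_mul (by positivity : (0:ℝ) ≤ 1 + x ^ 2)]
  congr 1
  ring

lemma integrable_jpn_rpow {m : ℝ} (hm : 1 < m) :
    Integrable (fun x : ℝ => jpn x ^ (-m)) := by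
  have h := integrable_rpow_neg_one_add_norm_sq (E := ℝ) (μ := volume) (r := m)
    (by simpa using hm)
  refine h.congr (Filter.Eventually.of_forall fun x => ?_)
  simp only [jpn_rpow_eq, Real.norm_eq_abs, sq_abs]

lemma integrable_jpn_rpow_shift {m : ℝ} (hm : 1 < m) (a : ℝ) :
    Integrable (fun x : ℝ => jpn (x - a) ^ (-m)) :=
  (integrable_jpn_rpow hm).comp_sub_right a

lemma integrable_jpn_mul {p q : ℝ} (hp : 0 ≤ p) (hq : 0 ≤ q) (hpq : 1 < p + q) (a b : ℝ) :
    Integrable (fun x : ℝ => jpn (x - a) ^ (-p) * jpn (b - x) ^ (-q)) := by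
  have h2 : Integrable (fun x : ℝ => jpn (x - a) ^ (-(p + q)) + jpn (x - b) ^ (-(p + q))) :=
    (integrable_jpn_rpow_shift hpq a).add (integrable_jpn_rpow_shift hpq b)
  refine h2.mono' ?_ (Filter.Eventually.of_forall fun x => ?_)
  · exact (((continuous_jpn_rpow (-p)).comp (by continuity)).mul
      ((continuous_jpn_rpow (-q)).comp (by continuity))).aestronglyMeasurable
  · have hbx : jpn (b - x) = jpn (x - b) := by
      rw [show b - x = -(x - b) by ring, jpn_neg_arg]
    rw [Real.norm_eq_abs, abs_of_nonneg (mul_nonneg (jpn_rpow_nonneg _ _) (jpn_rpow_nonneg _ _))]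
    rcases le_total (jpn (x - a)) (jpn (b - x)) with hc | hc
    · have h1 : jpn (b - x) ^ (-q) ≤ jpn (x - a) ^ (-q) :=
        rpow_neg_anti (jpn_pos _) hc hq
      calc jpn (x - a) ^ (-p) * jpn (b - x) ^ (-q)
          ≤ jpn (x - a) ^ (-p) * jpn (x - a) ^ (-q) :=
            mul_le_mul_of_nonneg_left h1 (jpn_rpow_nonneg _ _)
        _ = jpn (x - a) ^ (-(p + q)) := jpn_rpow_mul_jpn_rpow _ _ _
        _ ≤ _ := le_add_of_nonneg_right (jpn_rpow_nonneg _ _)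
    · have h1 : jpn (x - a) ^ (-p) ≤ jpn (b - x) ^ (-p) :=
        rpow_neg_anti (jpn_pos _) hc hp
      calc jpn (x - a) ^ (-p) * jpn (b - x) ^ (-q)
          ≤ jpn (b - x) ^ (-p) * jpn (b - x) ^ (-q) :=
            mul_le_mul_of_nonneg_right h1 (jpn_rpow_nonneg _ _)
        _ = jpn (b - x) ^ (-(p + q)) := jpn_rpow_mul_jpn_rpow _ _ _
        _ = jpn (x - b) ^ (-(p + q)) := by rw [hbx]
        _ ≤ _ := le_add_of_nonneg_left (jpn_rpow_nonneg _ _)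

lemma continuous_one_add_abs_rpow (s : ℝ) : Continuous fun x : ℝ => (1 + |x|) ^ s :=
  (continuous_const.add continuous_abs).rpow_const fun x =>
    Or.inl (by show (1:ℝ) + |x| ≠ 0; positivity)

/-! ### Integral estimates on regions -/

/-- Bound for the integral of `jpn x ^ (-s)` over a symmetric interval, `0 < s < 1`. -/
lemma jpn_integral_Icc {s : ℝ} (hs0 : 0 < s) (hs1 : s < 1) :
    ∃ K : ℝ, 0 < K ∧ ∀ T : ℝ, 0 ≤ T →
      ∫ x in Icc (-T) T, jpn x ^ (-s) ≤ K * (1 + T) ^ (1 - s) := by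
  refine ⟨Real.sqrt 2 ^ s * 2 / (1 - s),
    div_pos (mul_pos (Real.rpow_pos_of_pos (Real.sqrt_pos.mpr two_pos) s) two_pos)
      (by linarith), fun T hT => ?_⟩
  have hcont : Continuous fun x : ℝ => jpn x ^ (-s) := continuous_jpn_rpow (-s)
  have hcont2 : Continuous fun x : ℝ => Real.sqrt 2 ^ s * (1 + |x|) ^ (-s) :=
    continuous_const.mul (continuous_one_add_abs_rpow (-s))
  have hTT : (-T : ℝ) ≤ T := by linarith
  have step0 : ∫ x in Icc (-T) T, jpn x ^ (-s) = ∫ x in (-T)..T, jpn x ^ (-s) := by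
    rw [intervalIntegral.integral_of_le hTT, integral_Icc_eq_integral_Ioc]
  have step1 : ∫ x in (-T)..T, jpn x ^ (-s)
      ≤ ∫ x in (-T)..T, Real.sqrt 2 ^ s * (1 + |x|) ^ (-s) := by
    refine intervalIntegral.integral_mono_on hTT (hcont.intervalIntegrable _ _)
      (hcont2.intervalIntegrable _ _) fun x _ => ?_
    have h1 : (0:ℝ) < 1 + |x| := by positivity
    have h2 : jpn x ^ (-s) = Real.sqrt 2 ^ s * (Real.sqrt 2 * jpn x) ^ (-s) := by
      rw [Real.mul_rpow (Real.sqrt_nonneg 2) (jpn_nonneg x), ← mul_assoc,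
        ← Real.rpow_add (by positivity : (0:ℝ) < Real.sqrt 2)]
      simp
    rw [h2]
    exact mul_le_mul_of_nonneg_left
      (rpow_neg_anti h1 (one_add_abs_le x) hs0.le) (by positivity)
  have habs : ∫ x in (-T)..T, Real.sqrt 2 ^ s * (1 + |x|) ^ (-s)
      = Real.sqrt 2 ^ s * ∫ x in (-T)..T, (1 + |x|) ^ (-s) := by
    rw [← intervalIntegral.integral_const_mul]
  have hint2 : ∀ u v : ℝ, IntervalIntegrable (fun x : ℝ => (1 + |x|) ^ (-s)) volume u v :=
    fun u v => (continuous_one_add_abs_rpow (-s)).intervalIntegrable u v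
  have hsplit : ∫ x in (-T)..T, (1 + |x|) ^ (-s)
      = (∫ x in (-T)..(0:ℝ), (1 + |x|) ^ (-s)) + ∫ x in (0:ℝ)..T, (1 + |x|) ^ (-s) :=
    (intervalIntegral.integral_add_adjacent_intervals (hint2 _ _) (hint2 _ _)).symm
  have hrefl : ∫ x in (-T)..(0:ℝ), (1 + |x|) ^ (-s) = ∫ x in (0:ℝ)..T, (1 + |x|) ^ (-s) := by
    have h := intervalIntegral.integral_comp_neg (a := (0:ℝ)) (b := T)
      (fun x : ℝ => (1 + |x|) ^ (-s))
    simp only [abs_neg, neg_zero] at h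
    exact h.symm
  have hpos_eq : ∫ x in (0:ℝ)..T, (1 + |x|) ^ (-s) = ∫ x in (0:ℝ)..T, (1 + x) ^ (-s) := by
    refine intervalIntegral.integral_congr fun x hx => ?_
    rw [uIcc_of_le hT] at hx
    rw [abs_of_nonneg hx.1]
  have hval : ∫ x in (0:ℝ)..T, (1 + x) ^ (-s) = ((1 + T) ^ (1 - s) - 1) / (1 - s) := by
    have hcomp := intervalIntegral.integral_comp_add_left (a := (0:ℝ)) (b := T)
      (fun u : ℝ => u ^ (-s)) 1
    rw [hcomp, add_zero, integral_rpow (Or.inl (by linarith))]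
    rw [show -s + 1 = 1 - s by ring, Real.one_rpow]
  have hfin : ((1 + T) ^ (1 - s) - 1) / (1 - s) ≤ (1 + T) ^ (1 - s) / (1 - s) := by
    apply div_le_div_of_nonneg_right ?_ (by linarith)
    · linarith
  calc ∫ x in Icc (-T) T, jpn x ^ (-s)
      ≤ Real.sqrt 2 ^ s * ∫ x in (-T)..T, (1 + |x|) ^ (-s) := by
        rw [step0, ← habs]; exact step1
    _ = Real.sqrt 2 ^ s * (2 * (((1 + T) ^ (1 - s) - 1) / (1 - s))) := by
        rw [hsplit, hrefl, hpos_eq, hval]; ring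
    _ ≤ Real.sqrt 2 ^ s * (2 * ((1 + T) ^ (1 - s) / (1 - s))) := by
        refine mul_le_mul_of_nonneg_left (by linarith) (by positivity)
    _ = Real.sqrt 2 ^ s * 2 / (1 - s) * (1 + T) ^ (1 - s) := by ring

/-- Tail bound for the integral of `jpn x ^ (-m)`, `m > 1`. -/
lemma jpn_integral_tail {m : ℝ} (hm : 1 < m) :
    ∃ K : ℝ, 0 < K ∧ ∀ S : ℝ, 0 ≤ S →
      ∫ x in {x : ℝ | S < |x|}, jpn x ^ (-m) ≤ K * (1 + S) ^ (1 - m) := by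
  refine ⟨Real.sqrt 2 ^ m * 2 / (m - 1),
    div_pos (mul_pos (Real.rpow_pos_of_pos (Real.sqrt_pos.mpr two_pos) m) two_pos)
      (by linarith), fun S hS => ?_⟩
  have hIm : Integrable (fun x : ℝ => jpn x ^ (-m)) := integrable_jpn_rpow hm
  have hnn : ∀ x : ℝ, 0 ≤ jpn x ^ (-m) := fun x => jpn_rpow_nonneg x (-m)
  -- the set splits
  have hset : {x : ℝ | S < |x|} = Iio (-S) ∪ Ioi S := by
    ext x
    simp only [mem_setOf_eq, mem_union, mem_Iio, mem_Ioi, lt_abs, lt_neg]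
    tauto
  have hdisj : Disjoint (Iio (-S)) (Ioi S) :=
    (Iic_disjoint_Ioi (by linarith)).mono_left Iio_subset_Iic_self
  have hsplit : ∫ x in {x : ℝ | S < |x|}, jpn x ^ (-m)
      = (∫ x in Iio (-S), jpn x ^ (-m)) + ∫ x in Ioi S, jpn x ^ (-m) := by
    rw [hset]
    exact setIntegral_union hdisj measurableSet_Ioi hIm.integrableOn hIm.integrableOn
  -- reflection
  have hrefl : ∫ x in Iio (-S), jpn x ^ (-m) = ∫ x in Ioi S, jpn x ^ (-m) := by
    have h := integral_comp_neg_Ioi S (fun x : ℝ => jpn x ^ (-m))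
    simp only [jpn_neg_arg] at h
    rw [← integral_Iic_eq_integral_Iio, ← h]
  -- bound on Ioi S
  have hbig : IntegrableOn (fun x : ℝ => (1 + ‖x‖) ^ (-m)) (Ioi S) :=
    (integrable_one_add_norm (E := ℝ) (μ := volume) (by simpa using hm)).integrableOn
  have hIoiInt : IntegrableOn (fun x : ℝ => (1 + x) ^ (-m)) (Ioi S) := by
    refine hbig.congr_fun (fun x hx => ?_) measurableSet_Ioi
    dsimp only
    rw [Real.norm_eq_abs, abs_of_nonneg (by
      have : S < x := hx
      linarith)]
  have hmono : ∫ x in Ioi S, jpn x ^ (-m)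
      ≤ ∫ x in Ioi S, Real.sqrt 2 ^ m * (1 + x) ^ (-m) := by
    refine setIntegral_mono_on hIm.integrableOn (hIoiInt.const_mul _) measurableSet_Ioi
      fun x hx => ?_
    have hx' : S < x := hx
    have h1 : (0:ℝ) < 1 + x := by linarith
    have h2 : jpn x ^ (-m) = Real.sqrt 2 ^ m * (Real.sqrt 2 * jpn x) ^ (-m) := by
      rw [Real.mul_rpow (Real.sqrt_nonneg 2) (jpn_nonneg x), ← mul_assoc,
        ← Real.rpow_add (by positivity : (0:ℝ) < Real.sqrt 2)]
      simp
    have h3 : 1 + x ≤ Real.sqrt 2 * jpn x := by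
      have := one_add_abs_le x
      have hxabs : x ≤ |x| := le_abs_self x
      linarith
    rw [h2]
    exact mul_le_mul_of_nonneg_left (rpow_neg_anti h1 h3 (by linarith)) (by positivity)
  -- compute ∫ x in Ioi S, (1 + x) ^ (-m)
  have hval : ∫ x in Ioi S, (1 + x) ^ (-m) = (1 + S) ^ (1 - m) / (m - 1) := by
    have hderiv : ∀ x ∈ Ici S, HasDerivAt (fun x : ℝ => (1 + x) ^ (1 - m) / (1 - m))
        ((1 + x) ^ (-m)) x := by
      intro x hx
      have hx' : S ≤ x := hx
      have h1 : (0:ℝ) < 1 + x := by linarith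
      have hbase : HasDerivAt (fun x : ℝ => 1 + x) 1 x := (hasDerivAt_id x).const_add 1
      have hrpow : HasDerivAt (fun x : ℝ => (1 + x) ^ (1 - m))
          ((1 - m) * (1 + x) ^ (1 - m - 1) * 1) x := by
        exact (Real.hasDerivAt_rpow_const (p := 1 - m) (Or.inl h1.ne')).comp x hbase
      have hne : (1 : ℝ) - m ≠ 0 := by linarith
      have h2 : ((1 - m) * (1 + x) ^ (1 - m - 1) * 1) / (1 - m) = (1 + x) ^ (-m) := by
        rw [show (1:ℝ) - m - 1 = -m by ring]
        field_simp
      exact h2 ▸ (hrpow.div_const (1 - m))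
    have htend : Filter.Tendsto (fun x : ℝ => (1 + x) ^ (1 - m) / (1 - m))
        Filter.atTop (nhds 0) := by
      have h1 : Filter.Tendsto (fun x : ℝ => 1 + x) Filter.atTop Filter.atTop :=
        Filter.tendsto_atTop_add_const_left _ 1 Filter.tendsto_id
      have h2 : Filter.Tendsto (fun y : ℝ => y ^ (-(m - 1))) Filter.atTop (nhds 0) :=
        tendsto_rpow_neg_atTop (by linarith)
      have h3 : Filter.Tendsto (fun x : ℝ => (1 + x) ^ (1 - m)) Filter.atTop (nhds 0) := by
        have := h2.comp h1
        simpa [Function.comp_def, show -(m - 1) = 1 - m by ring] using this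
      simpa using h3.div_const (1 - m)
    have := integral_Ioi_of_hasDerivAt_of_tendsto' hderiv hIoiInt htend
    rw [this]
    rw [zero_sub]
    field_simp
    rw [show m - 1 = -(1 - m) by ring, div_neg]
  have hioi : ∫ x in Ioi S, jpn x ^ (-m)
      ≤ Real.sqrt 2 ^ m * ((1 + S) ^ (1 - m) / (m - 1)) := by
    calc ∫ x in Ioi S, jpn x ^ (-m)
        ≤ ∫ x in Ioi S, Real.sqrt 2 ^ m * (1 + x) ^ (-m) := hmono
      _ = Real.sqrt 2 ^ m * ∫ x in Ioi S, (1 + x) ^ (-m) := by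
          rw [integral_const_mul]
      _ = Real.sqrt 2 ^ m * ((1 + S) ^ (1 - m) / (m - 1)) := by rw [hval]
  calc ∫ x in {x : ℝ | S < |x|}, jpn x ^ (-m)
      = (∫ x in Iio (-S), jpn x ^ (-m)) + ∫ x in Ioi S, jpn x ^ (-m) := hsplit
    _ = 2 * ∫ x in Ioi S, jpn x ^ (-m) := by rw [hrefl]; ring
    _ ≤ 2 * (Real.sqrt 2 ^ m * ((1 + S) ^ (1 - m) / (m - 1))) := by
        refine mul_le_mul_of_nonneg_left hioi (by norm_num)
    _ = Real.sqrt 2 ^ m * 2 / (m - 1) * (1 + S) ^ (1 - m) := by ring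

/-! ### The key one-dimensional convolution estimate -/

lemma key_conv {p q : ℝ} (hp0 : 0 < p) (hp1 : p < 1) (hq0 : 0 < q) (hq1 : q < 1)
    (hpq : 1 < p + q) :
    ∃ C : ℝ, 0 < C ∧ ∀ y : ℝ,
      ∫ x : ℝ, jpn x ^ (-p) * jpn (y - x) ^ (-q) ≤ C * jpn y ^ (-(p + q - 1)) := by
  obtain ⟨K1, hK1, hS1⟩ := jpn_integral_Icc hp0 hp1
  obtain ⟨Kq, hKq, hSq⟩ := jpn_integral_Icc hq0 hq1
  obtain ⟨K2, hK2, hS2⟩ := jpn_integral_tail hpq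
  refine ⟨2 ^ q * K1 * 2 ^ (1 - p) + 2 ^ p * Kq * 4 ^ (1 - q) + 2 ^ q * K2,
    by positivity, fun y => ?_⟩
  set Y := jpn y with hY
  have hYpos : 0 < Y := jpn_pos y
  have hY1 : 1 ≤ Y := one_le_jpn y
  have hYabs : |y| ≤ Y := abs_le_jpn y
  set r := p + q - 1 with hr
  set f : ℝ → ℝ := fun x => jpn x ^ (-p) * jpn (y - x) ^ (-q) with hf
  have hfnn : ∀ x, 0 ≤ f x := fun x => mul_nonneg (jpn_rpow_nonneg _ _) (jpn_rpow_nonneg _ _)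
  have hfc : Continuous f := (continuous_jpn_rpow (-p)).mul
    ((continuous_jpn_rpow (-q)).comp (by continuity))
  set g3 : ℝ → ℝ := fun x => 2 ^ p * Y ^ (-p) * jpn (y - x) ^ (-q) with hg3
  have hYr : ∀ t : ℝ, 0 ≤ Y ^ t := fun t => Real.rpow_nonneg hYpos.le t
  have hg3nn : ∀ x, 0 ≤ g3 x := fun x =>
    mul_nonneg (mul_nonneg (Real.rpow_nonneg (by norm_num) p) (hYr (-p)))
      (jpn_rpow_nonneg _ _)
  have hg3c : Continuous g3 := continuous_const.mul
    ((continuous_jpn_rpow (-q)).comp (by continuity))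
  set g4 : ℝ → ℝ := fun x => 2 ^ q * jpn x ^ (-(p + q)) with hg4
  have hg4nn : ∀ x, 0 ≤ g4 x := fun x =>
    mul_nonneg (Real.rpow_nonneg (by norm_num) q) (jpn_rpow_nonneg _ _)
  set A1 : Set ℝ := Icc (-(|y| / 2)) (|y| / 2) with hA1
  set A2 : Set ℝ := Icc (-(2 * |y|)) (2 * |y|) with hA2
  set A3 : Set ℝ := {x : ℝ | 2 * |y| < |x|} with hA3
  have hA3m : MeasurableSet A3 := measurableSet_lt measurable_const continuous_abs.measurable
  -- pointwise domination
  have hcover : ∀ x, f x ≤ A1.indicator f x + A2.indicator g3 x + A3.indicator g4 x := by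
    intro x
    rcases le_or_gt |x| (|y| / 2) with h1 | h1
    · have hx1 : x ∈ A1 := by
        rw [hA1, mem_Icc]; constructor <;> [linarith [neg_abs_le x, le_abs_self x];
          linarith [le_abs_self x]]
      have : A1.indicator f x = f x := indicator_of_mem hx1 f
      have h2 := indicator_nonneg (fun x _ => hg3nn x) (a := x) (s := A2)
      have h3 := indicator_nonneg (fun x _ => hg4nn x) (a := x) (s := A3)
      linarith
    · rcases le_or_gt |x| (2 * |y|) with h2 | h2
      · have hx2 : x ∈ A2 := by
          rw [hA2, mem_Icc]; constructor <;> [linarith [neg_abs_le x];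
            linarith [le_abs_self x]]
        have heq : A2.indicator g3 x = g3 x := indicator_of_mem hx2 g3
        have hfg : f x ≤ g3 x := by
          have hY2 : jpn y ≤ 2 * jpn x := jpn_le_two_jpn (by linarith)
          have hx' : Y / 2 ≤ jpn x := by rw [hY]; linarith
          have hb : jpn x ^ (-p) ≤ (Y / 2) ^ (-p) := rpow_neg_anti (by positivity) hx' hp0.le
          have hc : (Y / 2) ^ (-p) = 2 ^ p * Y ^ (-p) := by
            rw [Real.div_rpow hYpos.le (by norm_num), Real.rpow_neg (by norm_num : (0:ℝ) ≤ 2)]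
            field_simp
          rw [hf, hg3]
          exact mul_le_mul_of_nonneg_right (by rw [← hc]; exact hb) (jpn_rpow_nonneg _ _)
        have h3 := indicator_nonneg (fun x _ => hfnn x) (a := x) (s := A1)
        have h4 := indicator_nonneg (fun x _ => hg4nn x) (a := x) (s := A3)
        linarith
      · have hx3 : x ∈ A3 := h2
        have heq : A3.indicator g4 x = g4 x := indicator_of_mem hx3 g4
        have hfg : f x ≤ g4 x := by
          have hyx : |x| ≤ 2 * |y - x| := by
            have : |x| - |y| ≤ |y - x| := by
              have := abs_sub_abs_le_abs_sub x y
              rw [abs_sub_comm] at this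
              linarith
            linarith
          have hY2 : jpn x ≤ 2 * jpn (y - x) := jpn_le_two_jpn hyx
          have hx' : jpn x / 2 ≤ jpn (y - x) := by linarith
          have hb : jpn (y - x) ^ (-q) ≤ (jpn x / 2) ^ (-q) :=
            rpow_neg_anti (by have := jpn_pos x; linarith) hx' hq0.le
          have hc : (jpn x / 2) ^ (-q) = 2 ^ q * jpn x ^ (-q) := by
            rw [Real.div_rpow (jpn_nonneg x) (by norm_num),
              Real.rpow_neg (by norm_num : (0:ℝ) ≤ 2)]
            field_simp
          calc f x ≤ jpn x ^ (-p) * (2 ^ q * jpn x ^ (-q)) := by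
                rw [hf]
                exact mul_le_mul_of_nonneg_left (by rw [← hc]; exact hb) (jpn_rpow_nonneg _ _)
            _ = 2 ^ q * (jpn x ^ (-p) * jpn x ^ (-q)) := by ring
            _ = g4 x := by rw [hg4, jpn_rpow_mul_jpn_rpow]
        have h3 := indicator_nonneg (fun x _ => hfnn x) (a := x) (s := A1)
        have h4 := indicator_nonneg (fun x _ => hg3nn x) (a := x) (s := A2)
        linarith
  -- integrability of the dominating function
  have hi1 : Integrable (A1.indicator f) :=
    (hfc.integrableOn_Icc).integrable_indicator measurableSet_Icc
  have hi2 : Integrable (A2.indicator g3) :=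
    (hg3c.integrableOn_Icc).integrable_indicator measurableSet_Icc
  have hi3 : Integrable (A3.indicator g4) :=
    (((integrable_jpn_rpow hpq).const_mul _).indicator hA3m)
  -- main integral bound
  have hmain : ∫ x, f x ≤ (∫ x in A1, f x) + (∫ x in A2, g3 x) + ∫ x in A3, g4 x := by
    have h1 : ∫ x, f x ≤ ∫ x, (A1.indicator f x + A2.indicator g3 x + A3.indicator g4 x) := by
      refine integral_mono_of_nonneg (Filter.Eventually.of_forall hfnn)
        ((hi1.add hi2).add hi3) (Filter.Eventually.of_forall hcover)
    have hi12 : Integrable (fun x : ℝ => A1.indicator f x + A2.indicator g3 x) :=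
      hi1.add hi2
    rw [integral_add hi12 hi3, integral_add hi1 hi2,
      integral_indicator measurableSet_Icc, integral_indicator measurableSet_Icc,
      integral_indicator hA3m] at h1
    exact h1
  -- piece 1
  have hp1b : ∫ x in A1, f x ≤ 2 ^ q * K1 * 2 ^ (1 - p) * Y ^ (-r) := by
    have hpt : ∀ x ∈ A1, f x ≤ 2 ^ q * Y ^ (-q) * jpn x ^ (-p) := by
      intro x hx
      rw [hA1, mem_Icc] at hx
      have hxabs : |x| ≤ |y| / 2 := abs_le.2 hx
      have hyx : |y| ≤ 2 * |y - x| := by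
        have : |y| - |x| ≤ |y - x| := abs_sub_abs_le_abs_sub y x
        linarith
      have hY2 : jpn y ≤ 2 * jpn (y - x) := jpn_le_two_jpn hyx
      have hx' : Y / 2 ≤ jpn (y - x) := by rw [hY]; linarith
      have hb : jpn (y - x) ^ (-q) ≤ (Y / 2) ^ (-q) := rpow_neg_anti (by positivity) hx' hq0.le
      have hc : (Y / 2) ^ (-q) = 2 ^ q * Y ^ (-q) := by
        rw [Real.div_rpow hYpos.le (by norm_num), Real.rpow_neg (by norm_num : (0:ℝ) ≤ 2)]
        field_simp
      calc f x ≤ jpn x ^ (-p) * (2 ^ q * Y ^ (-q)) := by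
            rw [hf]
            exact mul_le_mul_of_nonneg_left (by rw [← hc]; exact hb) (jpn_rpow_nonneg _ _)
        _ = 2 ^ q * Y ^ (-q) * jpn x ^ (-p) := by ring
    have hle : ∫ x in A1, f x ≤ ∫ x in A1, 2 ^ q * Y ^ (-q) * jpn x ^ (-p) :=
      setIntegral_mono_on hfc.integrableOn_Icc
        ((continuous_const.mul (continuous_jpn_rpow (-p))).integrableOn_Icc)
        measurableSet_Icc hpt
    have heq : ∫ x in A1, 2 ^ q * Y ^ (-q) * jpn x ^ (-p)
        = 2 ^ q * Y ^ (-q) * ∫ x in A1, jpn x ^ (-p) := integral_const_mul _ _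
    have hS1' : ∫ x in A1, jpn x ^ (-p) ≤ K1 * (1 + |y| / 2) ^ (1 - p) :=
      hS1 (|y| / 2) (by positivity)
    have h2Y : 1 + |y| / 2 ≤ 2 * Y := by linarith
    have hpow : (1 + |y| / 2) ^ (1 - p) ≤ 2 ^ (1 - p) * Y ^ (1 - p) := by
      rw [← Real.mul_rpow (by norm_num) hYpos.le]
      exact Real.rpow_le_rpow (by positivity) h2Y (by linarith)
    calc ∫ x in A1, f x ≤ 2 ^ q * Y ^ (-q) * ∫ x in A1, jpn x ^ (-p) := by
          rw [← heq]; exact hle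
      _ ≤ 2 ^ q * Y ^ (-q) * (K1 * (2 ^ (1 - p) * Y ^ (1 - p))) := by
          refine mul_le_mul_of_nonneg_left ?_ (by positivity)
          calc ∫ x in A1, jpn x ^ (-p) ≤ K1 * (1 + |y| / 2) ^ (1 - p) := hS1'
            _ ≤ K1 * (2 ^ (1 - p) * Y ^ (1 - p)) :=
                mul_le_mul_of_nonneg_left hpow hK1.le
      _ = 2 ^ q * K1 * 2 ^ (1 - p) * (Y ^ (-q) * Y ^ (1 - p)) := by ring
      _ = 2 ^ q * K1 * 2 ^ (1 - p) * Y ^ (-r) := by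
          rw [← Real.rpow_add hYpos, hr]
          congr 1
          ring
  -- piece 2
  have hp2b : ∫ x in A2, g3 x ≤ 2 ^ p * Kq * 4 ^ (1 - q) * Y ^ (-r) := by
    set B : Set ℝ := Icc (-(2 * |y|) - y) (2 * |y| - y) with hB
    have htrans : ∫ x in A2, jpn (y - x) ^ (-q) = ∫ u in B, jpn u ^ (-q) := by
      have hkey : ∀ x : ℝ, A2.indicator (fun x => jpn (y - x) ^ (-q)) x
          = B.indicator (fun u => jpn u ^ (-q)) (x - y) := by
        intro x
        by_cases hx : x ∈ A2
        · have hxy : x - y ∈ B := by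
            rw [hA2, mem_Icc] at hx
            rw [hB, mem_Icc]
            constructor <;> linarith
          rw [indicator_of_mem hx, indicator_of_mem hxy,
            show y - x = -(x - y) by ring, jpn_neg_arg]
        · have hxy : x - y ∉ B := by
            intro hmem
            apply hx
            rw [hB, mem_Icc] at hmem
            rw [hA2, mem_Icc]
            constructor <;> linarith
          rw [indicator_of_notMem hx, indicator_of_notMem hxy]
      rw [← integral_indicator measurableSet_Icc, ← integral_indicator measurableSet_Icc]
      calc ∫ x, A2.indicator (fun x => jpn (y - x) ^ (-q)) x
          = ∫ x, B.indicator (fun u => jpn u ^ (-q)) (x - y) := by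
            congr 1; funext x; exact hkey x
        _ = ∫ u, B.indicator (fun u => jpn u ^ (-q)) u :=
            integral_sub_right_eq_self (B.indicator fun u => jpn u ^ (-q)) y
    have hBsub : B ⊆ Icc (-(3 * |y|)) (3 * |y|) := by
      rw [hB]
      apply Icc_subset_Icc <;> [nlinarith [neg_abs_le y, le_abs_self y];
        nlinarith [neg_abs_le y, le_abs_self y]]
    have hmono2 : ∫ u in B, jpn u ^ (-q) ≤ ∫ u in Icc (-(3 * |y|)) (3 * |y|), jpn u ^ (-q) :=
      setIntegral_mono_set ((continuous_jpn_rpow (-q)).integrableOn_Icc)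
        (Filter.Eventually.of_forall fun x => jpn_rpow_nonneg x (-q))
        (HasSubset.Subset.eventuallyLE hBsub)
    have hSq' : ∫ u in Icc (-(3 * |y|)) (3 * |y|), jpn u ^ (-q)
        ≤ Kq * (1 + 3 * |y|) ^ (1 - q) := hSq (3 * |y|) (by positivity)
    have h4Y : 1 + 3 * |y| ≤ 4 * Y := by linarith
    have hpow : (1 + 3 * |y|) ^ (1 - q) ≤ 4 ^ (1 - q) * Y ^ (1 - q) := by
      rw [← Real.mul_rpow (by norm_num) hYpos.le]
      exact Real.rpow_le_rpow (by positivity) h4Y (by linarith)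
    have heq : ∫ x in A2, g3 x = 2 ^ p * Y ^ (-p) * ∫ x in A2, jpn (y - x) ^ (-q) := by
      rw [hg3]
      exact integral_const_mul _ _
    calc ∫ x in A2, g3 x
        = 2 ^ p * Y ^ (-p) * ∫ u in B, jpn u ^ (-q) := by rw [heq, htrans]
      _ ≤ 2 ^ p * Y ^ (-p) * (Kq * (4 ^ (1 - q) * Y ^ (1 - q))) := by
          refine mul_le_mul_of_nonneg_left ?_ (by positivity)
          calc ∫ u in B, jpn u ^ (-q) ≤ Kq * (1 + 3 * |y|) ^ (1 - q) :=
                le_trans hmono2 hSq'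
            _ ≤ Kq * (4 ^ (1 - q) * Y ^ (1 - q)) := mul_le_mul_of_nonneg_left hpow hKq.le
      _ = 2 ^ p * Kq * 4 ^ (1 - q) * (Y ^ (-p) * Y ^ (1 - q)) := by ring
      _ = 2 ^ p * Kq * 4 ^ (1 - q) * Y ^ (-r) := by
          rw [← Real.rpow_add hYpos, hr]
          congr 1
          ring
  -- piece 3
  have hp3b : ∫ x in A3, g4 x ≤ 2 ^ q * K2 * Y ^ (-r) := by
    have heq : ∫ x in A3, g4 x = 2 ^ q * ∫ x in A3, jpn x ^ (-(p + q)) := by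
      rw [hg4]
      exact integral_const_mul _ _
    have hS2' : ∫ x in A3, jpn x ^ (-(p + q)) ≤ K2 * (1 + 2 * |y|) ^ (1 - (p + q)) :=
      hS2 (2 * |y|) (by positivity)
    have hYle : Y ≤ 1 + 2 * |y| := by
      have := jpn_le_one_add_abs y
      rw [← hY] at this
      linarith
    have hpow : (1 + 2 * |y|) ^ (1 - (p + q)) ≤ Y ^ (-r) := by
      have h := rpow_neg_anti hYpos hYle (by rw [hr]; linarith : (0:ℝ) ≤ r)
      rw [show (1 : ℝ) - (p + q) = -r by rw [hr]; ring]
      exact h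
    calc ∫ x in A3, g4 x = 2 ^ q * ∫ x in A3, jpn x ^ (-(p + q)) := heq
      _ ≤ 2 ^ q * (K2 * Y ^ (-r)) := by
          refine mul_le_mul_of_nonneg_left ?_ (by positivity)
          calc ∫ x in A3, jpn x ^ (-(p + q)) ≤ K2 * (1 + 2 * |y|) ^ (1 - (p + q)) := hS2'
            _ ≤ K2 * Y ^ (-r) := mul_le_mul_of_nonneg_left hpow hK2.le
      _ = 2 ^ q * K2 * Y ^ (-r) := by ring
  calc ∫ x, f x ≤ (∫ x in A1, f x) + (∫ x in A2, g3 x) + ∫ x in A3, g4 x := hmain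
    _ ≤ 2 ^ q * K1 * 2 ^ (1 - p) * Y ^ (-r) + 2 ^ p * Kq * 4 ^ (1 - q) * Y ^ (-r)
        + 2 ^ q * K2 * Y ^ (-r) := by
        gcongr
    _ = (2 ^ q * K1 * 2 ^ (1 - p) + 2 ^ p * Kq * 4 ^ (1 - q) + 2 ^ q * K2) * Y ^ (-r) := by
        ring

/-- Shifted version of the key convolution estimate. -/
lemma key_conv' {p q : ℝ} (hp0 : 0 < p) (hp1 : p < 1) (hq0 : 0 < q) (hq1 : q < 1)
    (hpq : 1 < p + q) :
    ∃ C : ℝ, 0 < C ∧ ∀ a b : ℝ,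
      ∫ x : ℝ, jpn (x - a) ^ (-p) * jpn (b - x) ^ (-q) ≤ C * jpn (b - a) ^ (-(p + q - 1)) := by
  obtain ⟨C, hC, hbound⟩ := key_conv hp0 hp1 hq0 hq1 hpq
  refine ⟨C, hC, fun a b => ?_⟩
  have heq : (fun x : ℝ => jpn (x - a) ^ (-p) * jpn (b - x) ^ (-q))
      = fun x : ℝ => (fun u : ℝ => jpn u ^ (-p) * jpn ((b - a) - u) ^ (-q)) (x - a) := by
    funext x
    simp only []
    congr 2
    ring
  rw [heq, integral_sub_right_eq_self (fun u : ℝ => jpn u ^ (-p) * jpn ((b - a) - u) ^ (-q)) a]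
  exact hbound (b - a)

/-- Double convolution estimate: for `2/3 < c < 1`,
`∫∫ ⟨τ₁ - a₁⟩^{-c} ⟨τ₂ - a₂⟩^{-c} ⟨τ - τ₁ + τ₂ - a₃⟩^{-c} dτ₁ dτ₂
  ≤ C ⟨τ - a₁ + a₂ - a₃⟩^{-(3c - 2)}`. -/
theorem double_convolution_bracket (c : ℝ) (hc1 : 2 / 3 < c) (hc2 : c < 1) :
    ∃ C : ℝ, 0 < C ∧ ∀ a₁ a₂ a₃ τ : ℝ,
      (∫ τ₁ : ℝ, ∫ τ₂ : ℝ,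
          jpn (τ₁ - a₁) ^ (-c) * jpn (τ₂ - a₂) ^ (-c)
            * jpn (τ - τ₁ + τ₂ - a₃) ^ (-c))
        ≤ C * jpn (τ - a₁ + a₂ - a₃) ^ (-(3 * c - 2)) := by
  have hc0 : 0 < c := by linarith
  have hcc : 1 < c + c := by linarith
  have hq0 : 0 < 2 * c - 1 := by linarith
  have hq1 : 2 * c - 1 < 1 := by linarith
  have hsum : 1 < c + (2 * c - 1) := by linarith
  obtain ⟨C₁, hC₁, hb₁⟩ := key_conv' hc0 hc2 hc0 hc2 hcc
  obtain ⟨C₂, hC₂, hb₂⟩ := key_conv' hc0 hc2 hq0 hq1 hsum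
  refine ⟨C₁ * C₂, by positivity, fun a₁ a₂ a₃ τ => ?_⟩
  set s : ℝ := τ + a₂ - a₃ with hs
  -- the outer majorant
  set G : ℝ → ℝ := fun τ₁ => C₁ * (jpn (τ₁ - a₁) ^ (-c) * jpn (s - τ₁) ^ (-(2 * c - 1)))
    with hG
  have hGint : Integrable G :=
    (integrable_jpn_mul hc0.le hq0.le hsum a₁ s).const_mul C₁
  -- pointwise bound of inner integral
  have hinner : ∀ τ₁ : ℝ,
      (∫ τ₂ : ℝ, jpn (τ₁ - a₁) ^ (-c) * jpn (τ₂ - a₂) ^ (-c)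
        * jpn (τ - τ₁ + τ₂ - a₃) ^ (-c)) ≤ G τ₁ := by
    intro τ₁
    have heq1 : (∫ τ₂ : ℝ, jpn (τ₁ - a₁) ^ (-c) * jpn (τ₂ - a₂) ^ (-c)
        * jpn (τ - τ₁ + τ₂ - a₃) ^ (-c))
        = jpn (τ₁ - a₁) ^ (-c)
          * ∫ τ₂ : ℝ, jpn (τ₂ - a₂) ^ (-c) * jpn ((a₃ - τ + τ₁) - τ₂) ^ (-c) := by
      rw [← integral_const_mul]
      congr 1
      funext τ₂
      rw [show (a₃ - τ + τ₁) - τ₂ = -(τ - τ₁ + τ₂ - a₃) by ring, jpn_neg_arg]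
      ring
    rw [heq1]
    have hb := hb₁ a₂ (a₃ - τ + τ₁)
    have hstep : jpn (τ₁ - a₁) ^ (-c)
        * ∫ τ₂ : ℝ, jpn (τ₂ - a₂) ^ (-c) * jpn ((a₃ - τ + τ₁) - τ₂) ^ (-c)
        ≤ jpn (τ₁ - a₁) ^ (-c) * (C₁ * jpn ((a₃ - τ + τ₁) - a₂) ^ (-(c + c - 1))) :=
      mul_le_mul_of_nonneg_left hb (jpn_rpow_nonneg _ _)
    refine le_trans hstep (le_of_eq ?_)
    rw [hG]
    have harg : jpn ((a₃ - τ + τ₁) - a₂) = jpn (s - τ₁) := by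
      rw [show (a₃ - τ + τ₁) - a₂ = -(s - τ₁) by rw [hs]; ring, jpn_neg_arg]
    rw [harg, show c + c - 1 = 2 * c - 1 by ring]
    ring
  -- nonnegativity of the inner integral
  have hnn : ∀ τ₁ : ℝ, 0 ≤ ∫ τ₂ : ℝ, jpn (τ₁ - a₁) ^ (-c) * jpn (τ₂ - a₂) ^ (-c)
      * jpn (τ - τ₁ + τ₂ - a₃) ^ (-c) := by
    intro τ₁
    refine integral_nonneg fun τ₂ => ?_
    exact mul_nonneg (mul_nonneg (jpn_rpow_nonneg _ _) (jpn_rpow_nonneg _ _))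
      (jpn_rpow_nonneg _ _)
  have houter : (∫ τ₁ : ℝ, ∫ τ₂ : ℝ, jpn (τ₁ - a₁) ^ (-c) * jpn (τ₂ - a₂) ^ (-c)
      * jpn (τ - τ₁ + τ₂ - a₃) ^ (-c)) ≤ ∫ τ₁, G τ₁ :=
    integral_mono_of_nonneg (Filter.Eventually.of_forall hnn) hGint
      (Filter.Eventually.of_forall hinner)
  have hGval : ∫ τ₁, G τ₁
      = C₁ * ∫ τ₁, jpn (τ₁ - a₁) ^ (-c) * jpn (s - τ₁) ^ (-(2 * c - 1)) := by
    rw [hG]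
    exact integral_const_mul _ _
  have hb2 := hb₂ a₁ s
  have hfinal : jpn (s - a₁) ^ (-(c + (2 * c - 1) - 1))
      = jpn (τ - a₁ + a₂ - a₃) ^ (-(3 * c - 2)) := by
    rw [show s - a₁ = τ - a₁ + a₂ - a₃ by rw [hs]; ring,
      show c + (2 * c - 1) - 1 = 3 * c - 2 by ring]
  calc (∫ τ₁ : ℝ, ∫ τ₂ : ℝ, jpn (τ₁ - a₁) ^ (-c) * jpn (τ₂ - a₂) ^ (-c)
      * jpn (τ - τ₁ + τ₂ - a₃) ^ (-c)) ≤ ∫ τ₁, G τ₁ := houter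
    _ = C₁ * ∫ τ₁, jpn (τ₁ - a₁) ^ (-c) * jpn (s - τ₁) ^ (-(2 * c - 1)) := hGval
    _ ≤ C₁ * (C₂ * jpn (s - a₁) ^ (-(c + (2 * c - 1) - 1))) :=
        mul_le_mul_of_nonneg_left hb2 hC₁.le
    _ = C₁ * C₂ * jpn (τ - a₁ + a₂ - a₃) ^ (-(3 * c - 2)) := by
        rw [hfinal]; ring
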